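/- arXiv:2011.10092 — 5 statements merged into one kernel-verified Lean document; each statement's English description precedes it below -/
import Mathlib

section
/- Let μ be a finite positive measure on [0,∞) with μ({0}) = 0 and K(t) = ∫₀^∞ e^{-tx} dμ(x). Then for every ω ≠ 0, the improper integral ∫₀^∞ K(t) e^{-itω} dt converges and equals ∫₀^∞ x/(x² + ω²) dμ(x) − i ∫₀^∞ ω/(x² + ω²) dμ(x). -/
open MeasureTheory Set Filter

private lemma ftcm_cne (ω : ℝ) (hω : ω ≠ 0) (x : ℝ) : (x:ℂ) + ω * Complex.I ≠ 0 := by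
  intro h
  have h2 := congrArg Complex.im h
  simp at h2
  exact hω h2

private lemma ftcm_cnorm (ω x : ℝ) : |ω| ≤ ‖(x:ℂ) + ω * Complex.I‖ := by
  rw [Complex.norm_def, Complex.normSq_apply]
  simp only [Complex.add_re, Complex.ofReal_re, Complex.mul_re, Complex.I_re, Complex.I_im,
    Complex.ofReal_im, Complex.add_im, Complex.mul_im]
  rw [show |ω| = Real.sqrt (ω^2) from (Real.sqrt_sq_eq_abs ω).symm]
  apply Real.sqrt_le_sqrt
  nlinarith [sq_nonneg x]

private lemma ftcm_cinv (ω : ℝ) (hω : ω ≠ 0) (x : ℝ) :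
    ((x:ℂ) + ω * Complex.I)⁻¹
      = ((x / (x ^ 2 + ω ^ 2) : ℝ) : ℂ) - Complex.I * ((ω / (x ^ 2 + ω ^ 2) : ℝ) : ℂ) := by
  have hd : (x:ℝ) ^ 2 + ω ^ 2 ≠ 0 := by positivity
  have hd' : ((x:ℂ) ^ 2 + (ω:ℂ) ^ 2) ≠ 0 := by
    intro h
    apply hd
    have : (((x:ℝ) ^ 2 + ω ^ 2 : ℝ) : ℂ) = 0 := by push_cast; exact h
    exact_mod_cast this
  apply inv_eq_of_mul_eq_one_right
  push_cast
  field_simp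
  ring_nf
  rw [Complex.I_sq]
  ring

private lemma ftcm_cont_exp (ω : ℝ) :
    Continuous fun p : ℝ × ℝ => Complex.exp (-((p.2:ℂ) + ω * Complex.I) * p.1) :=
  Complex.continuous_exp.comp <|
    (((Complex.continuous_ofReal.comp continuous_snd).add continuous_const).neg).mul
      (Complex.continuous_ofReal.comp continuous_fst)

private lemma ftcm_cont_exp2 (ω A : ℝ) :
    Continuous fun x : ℝ => Complex.exp (-((x:ℂ) + ω * Complex.I) * A) :=
  Complex.continuous_exp.comp <|
    ((Complex.continuous_ofReal.add continuous_const).neg).mul continuous_const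

private lemma ftcm_norm_exp (ω x A : ℝ) :
    ‖Complex.exp (-((x:ℂ) + ω * Complex.I) * A)‖ = Real.exp (-(x * A)) := by
  rw [Complex.norm_exp]
  congr 1
  simp [Complex.mul_re]

private lemma ftcm_ofReal (μ' : Measure ℝ) (f : ℝ → ℝ) :
    ((∫ x, f x ∂μ' : ℝ) : ℂ) = ∫ x, (f x : ℂ) ∂μ' := integral_ofReal.symm

set_option maxHeartbeats 1000000 in
/-- Fourier transform of a bounded completely monotone kernel: if `μ` is a finite
positive measure on `[0,∞)` with `μ({0}) = 0` and `K(t) = ∫₀^∞ e^{-t x} dμ(x)`,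
then for every `ω ≠ 0` the improper integral `∫₀^∞ K(t) e^{-i t ω} dt` converges
and equals `∫₀^∞ x/(x²+ω²) dμ(x) − i ∫₀^∞ ω/(x²+ω²) dμ(x)`. -/
theorem fourier_transform_of_completely_monotone
    (μ : Measure ℝ) [IsFiniteMeasure μ] (hzero : μ {0} = 0) (K : ℝ → ℝ)
    (hK : ∀ t : ℝ, 0 ≤ t → K t = ∫ x in Ici 0, Real.exp (-t * x) ∂μ)
    (ω : ℝ) (hω : ω ≠ 0) :
    Tendsto
      (fun A : ℝ => ∫ t in (0:ℝ)..A, (K t : ℂ) * Complex.exp (-Complex.I * t * ω))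
      atTop
      (nhds
        (((∫ x in Ici 0, x / (x ^ 2 + ω ^ 2) ∂μ : ℝ) : ℂ)
          - Complex.I * ((∫ x in Ici 0, ω / (x ^ 2 + ω ^ 2) ∂μ : ℝ) : ℂ))) := by
  have hωpos : (0:ℝ) < |ω| := abs_pos.2 hω
  -- Step A : formula for finite A
  have keyA : ∀ A : ℝ, 0 ≤ A →
      (∫ t in (0:ℝ)..A, (K t : ℂ) * Complex.exp (-Complex.I * t * ω))
        = ∫ x in Ici 0,
            (1 - Complex.exp (-((x:ℂ) + ω * Complex.I) * A)) / ((x:ℂ) + ω * Complex.I) ∂μ := by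
    intro A hA
    have h1 : EqOn (fun t : ℝ => (K t : ℂ) * Complex.exp (-Complex.I * t * ω))
        (fun t : ℝ => ∫ x in Ici 0, Complex.exp (-((x:ℂ) + ω * Complex.I) * t) ∂μ)
        (uIcc 0 A) := by
      intro t ht
      rw [uIcc_of_le hA] at ht
      have hpt : ∀ x : ℝ, ((Real.exp (-t*x) : ℝ) : ℂ) • Complex.exp (-Complex.I * t * ω)
          = Complex.exp (-((x:ℂ) + ω * Complex.I) * t) := by
        intro x
        rw [smul_eq_mul, Complex.ofReal_exp, ← Complex.exp_add]
        congr 1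
        push_cast
        ring
      simp only
      rw [hK t ht.1, ftcm_ofReal, ← smul_eq_mul, ← integral_smul_const]
      exact integral_congr_ae (ae_of_all _ hpt)
    rw [intervalIntegral.integral_congr h1, intervalIntegral.integral_of_le hA]
    haveI : IsFiniteMeasure (volume.restrict (Ioc (0:ℝ) A)) :=
      ⟨by rw [Measure.restrict_apply_univ]; exact measure_Ioc_lt_top⟩
    have hint : Integrable
        (Function.uncurry fun (t : ℝ) (x : ℝ) => Complex.exp (-((x:ℂ) + ω * Complex.I) * t))
        ((volume.restrict (Ioc (0:ℝ) A)).prod (μ.restrict (Ici 0))) := by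
      apply Integrable.mono' (integrable_const (1:ℝ))
      · exact (ftcm_cont_exp ω).aestronglyMeasurable
      · rw [Measure.prod_restrict]
        filter_upwards [ae_restrict_mem (measurableSet_Ioc.prod measurableSet_Ici)] with p hp
        obtain ⟨t, x⟩ := p
        rw [Function.uncurry_apply_pair]
        rw [ftcm_norm_exp, Real.exp_le_one_iff]
        have h2 := hp.1.1.le
        have h3 := hp.2.out
        nlinarith
    rw [MeasureTheory.integral_integral_swap hint]
    apply integral_congr_ae (ae_of_all _ ?_)
    intro x
    rw [← intervalIntegral.integral_of_le hA,
      integral_exp_mul_complex (neg_ne_zero.2 (ftcm_cne ω hω x))]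
    rw [Complex.ofReal_zero, mul_zero, Complex.exp_zero, div_neg, ← neg_div, neg_sub]
  -- Step B : dominated convergence
  have hlim : Tendsto
      (fun A : ℝ => ∫ x in Ici 0,
          (1 - Complex.exp (-((x:ℂ) + ω * Complex.I) * A)) / ((x:ℂ) + ω * Complex.I) ∂μ)
      atTop
      (nhds (∫ x in Ici 0, ((x:ℂ) + ω * Complex.I)⁻¹ ∂μ)) := by
    apply tendsto_integral_filter_of_dominated_convergence (fun _ => 2 / |ω|)
    · apply Eventually.of_forall
      intro A
      apply Continuous.aestronglyMeasurable
      exact (continuous_const.sub (ftcm_cont_exp2 ω A)).div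
        (Complex.continuous_ofReal.add continuous_const) (ftcm_cne ω hω)
    · filter_upwards [eventually_ge_atTop (0:ℝ)] with A hA
      filter_upwards [ae_restrict_mem measurableSet_Ici] with x hx
      rw [norm_div]
      have h2 : ‖(1:ℂ) - Complex.exp (-((x:ℂ) + ω * Complex.I) * A)‖ ≤ 2 := by
        calc ‖(1:ℂ) - Complex.exp (-((x:ℂ) + ω * Complex.I) * A)‖
            ≤ ‖(1:ℂ)‖ + ‖Complex.exp (-((x:ℂ) + ω * Complex.I) * A)‖ := norm_sub_le _ _
          _ ≤ 1 + 1 := by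
              rw [norm_one, ftcm_norm_exp]
              have : Real.exp (-(x*A)) ≤ 1 := by
                rw [Real.exp_le_one_iff]
                nlinarith [hx.out]
              linarith
          _ = 2 := by norm_num
      exact div_le_div₀ (by norm_num) h2 hωpos (ftcm_cnorm ω x)
    · exact integrable_const _
    · have h0 : μ.restrict (Ici 0) {0} = 0 := by
        rw [Measure.restrict_apply (measurableSet_singleton 0)]
        exact measure_mono_null inter_subset_left hzero
      have hne : ∀ᵐ x ∂μ.restrict (Ici 0), x ≠ 0 := by
        rw [ae_iff]
        simpa using h0
      filter_upwards [hne, ae_restrict_mem measurableSet_Ici] with x hx hx0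
      have hxpos : 0 < x := lt_of_le_of_ne hx0 (Ne.symm hx)
      have hexp : Tendsto (fun A : ℝ => Complex.exp (-((x:ℂ) + ω * Complex.I) * A))
          atTop (nhds 0) := by
        rw [tendsto_zero_iff_norm_tendsto_zero]
        simp only [ftcm_norm_exp]
        apply Real.tendsto_exp_atBot.comp
        exact tendsto_neg_atTop_atBot.comp (Tendsto.const_mul_atTop hxpos tendsto_id)
      have h := ((tendsto_const_nhds (x := (1:ℂ))).sub hexp).div_const ((x:ℂ) + ω * Complex.I)
      simpa [one_div] using h
  -- Step C : identify the limit value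
  have hval : (∫ x in Ici 0, ((x:ℂ) + ω * Complex.I)⁻¹ ∂μ)
      = ((∫ x in Ici 0, x / (x ^ 2 + ω ^ 2) ∂μ : ℝ) : ℂ)
        - Complex.I * ((∫ x in Ici 0, ω / (x ^ 2 + ω ^ 2) ∂μ : ℝ) : ℂ) := by
    have hfint : Integrable (fun x : ℝ => x / (x ^ 2 + ω ^ 2)) (μ.restrict (Ici 0)) := by
      apply Integrable.mono' (integrable_const (1 / (2 * |ω|)))
      · apply Continuous.aestronglyMeasurable
        exact continuous_id.div ((continuous_pow 2).add continuous_const) (fun x => by positivity)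
      · apply ae_of_all
        intro x
        rw [Real.norm_eq_abs, abs_div, abs_of_pos (by positivity : (0:ℝ) < x ^ 2 + ω ^ 2),
          div_le_div_iff₀ (by positivity) (by positivity)]
        nlinarith [sq_nonneg (|x| - |ω|), sq_abs x, sq_abs ω, abs_nonneg x, abs_nonneg ω]
    have hgint : Integrable (fun x : ℝ => ω / (x ^ 2 + ω ^ 2)) (μ.restrict (Ici 0)) := by
      apply Integrable.mono' (integrable_const (1 / |ω|))
      · apply Continuous.aestronglyMeasurable
        exact continuous_const.div ((continuous_pow 2).add continuous_const) (fun x => by positivity)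
      · apply ae_of_all
        intro x
        rw [Real.norm_eq_abs, abs_div, abs_of_pos (by positivity : (0:ℝ) < x ^ 2 + ω ^ 2),
          div_le_div_iff₀ (by positivity) hωpos]
        nlinarith [sq_nonneg x, sq_abs ω, abs_nonneg ω]
    rw [show (fun x : ℝ => ((x:ℂ) + ω * Complex.I)⁻¹)
        = fun x : ℝ => ((x / (x ^ 2 + ω ^ 2) : ℝ) : ℂ)
            - Complex.I * ((ω / (x ^ 2 + ω ^ 2) : ℝ) : ℂ) from funext (ftcm_cinv ω hω)]
    have hfint' : Integrable (fun x : ℝ => ((x / (x ^ 2 + ω ^ 2) : ℝ) : ℂ))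
        (μ.restrict (Ici 0)) := hfint.ofReal
    have hgint' : Integrable (fun x : ℝ => Complex.I * ((ω / (x ^ 2 + ω ^ 2) : ℝ) : ℂ))
        (μ.restrict (Ici 0)) := (hgint.ofReal).const_mul Complex.I
    rw [integral_sub hfint' hgint', integral_const_mul, ftcm_ofReal, ftcm_ofReal]
  rw [← hval]
  apply hlim.congr'
  filter_upwards [eventually_ge_atTop (0:ℝ)] with A hA
  exact (keyA A hA).symm
end

section
/- Let μ be a nonzero finite positive measure on [0,∞), let α_k ↑ ∞, and for large k let ω_k > 0 be the unique solution of ω_k = α_k · K_sin(ω_k), where K_sin(ω) = ∫₀^∞ ω/(x²+ω²) dμ(x). Then ω_k² / α_k → μ([0,∞)) as k → ∞. -/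
open MeasureTheory Set Filter

lemma aux_ratio_tendsto (x : ℝ) :
    Tendsto (fun w : ℝ => w ^ 2 / (x ^ 2 + w ^ 2)) atTop (nhds 1) := by
  have hd : Tendsto (fun w : ℝ => x ^ 2 + w ^ 2) atTop atTop :=
    tendsto_atTop_add_const_left _ _ (tendsto_pow_atTop two_ne_zero)
  have h0 : Tendsto (fun w : ℝ => x ^ 2 / (x ^ 2 + w ^ 2)) atTop (nhds 0) :=
    Tendsto.div_atTop tendsto_const_nhds hd
  have h1 := (tendsto_const_nhds (x := (1:ℝ)) (f := atTop)).sub h0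
  rw [sub_zero] at h1
  apply h1.congr'
  filter_upwards [eventually_gt_atTop (0:ℝ)] with w hw
  have hdn : (0:ℝ) < x ^ 2 + w ^ 2 := by positivity
  field_simp
  ring

lemma aux_sqrt_atTop : Tendsto Real.sqrt atTop atTop := by
  apply tendsto_atTop.mpr
  intro b
  filter_upwards [eventually_ge_atTop (b ^ 2)] with x hx
  calc b ≤ |b| := le_abs_self b
    _ = Real.sqrt (b ^ 2) := (Real.sqrt_sq_eq_abs b).symm
    _ ≤ Real.sqrt x := Real.sqrt_le_sqrt hx

/-- If `α_k ↑ ∞` and, for all large `k`, `ω_k > 0` solves `ω_k = α_k K_sin(ω_k)`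
where `K_sin(ω) = ∫₀^∞ ω/(x²+ω²) dμ(x)` for a nonzero finite positive measure `μ`
on `[0,∞)`, then `ω_k²/α_k → μ([0,∞))` as `k → ∞`. -/
theorem omega_sq_div_alpha_tendsto
    (μ : Measure ℝ) [IsFiniteMeasure μ] (hμ : μ (Ici 0) ≠ 0)
    (Ksin : ℝ → ℝ)
    (hKsin : ∀ ω : ℝ, 0 < ω → Ksin ω = ∫ x in Ici 0, ω / (x ^ 2 + ω ^ 2) ∂μ)
    (a : ℕ → ℝ) (ha0 : ∀ k, 0 < a k) (hamono : Monotone a)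
    (hatop : Tendsto a atTop atTop)
    (ω : ℕ → ℝ)
    (hω : ∀ᶠ k in atTop, 0 < ω k ∧ ω k = a k * Ksin (ω k)) :
    Tendsto (fun k => (ω k) ^ 2 / a k) atTop (nhds (μ (Ici 0)).toReal) := by
  -- a point mass below some natural number R
  obtain ⟨R, hR⟩ : ∃ n : ℕ, μ (Icc (0:ℝ) n) ≠ 0 := by
    by_contra h
    push_neg at h
    apply hμ
    have hset : Ici (0:ℝ) ⊆ ⋃ n : ℕ, Icc (0:ℝ) n := by
      intro x hx
      obtain ⟨n, hn⟩ := exists_nat_ge x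
      exact mem_iUnion.mpr ⟨n, ⟨hx, hn⟩⟩
    exact measure_mono_null hset (measure_iUnion_null h)
  set c := (μ (Icc (0:ℝ) R)).toReal with hcdef
  have hc : 0 < c := ENNReal.toReal_pos hR (measure_ne_top μ _)
  -- integrability of the kernel
  have hcontd : ∀ w : ℝ, 0 < w → Continuous fun x : ℝ => w / (x ^ 2 + w ^ 2) := by
    intro w hw
    exact continuous_const.div (by continuity) (fun x => by positivity)
  have hint : ∀ w : ℝ, 0 < w → IntegrableOn (fun x => w / (x ^ 2 + w ^ 2)) (Ici 0) μ := by
    intro w hw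
    refine (integrable_const (1 / w)).mono' ((hcontd w hw).aestronglyMeasurable) ?_
    filter_upwards with x
    rw [Real.norm_eq_abs, abs_of_nonneg (by positivity)]
    rw [div_le_div_iff₀ (by positivity) hw]
    nlinarith [sq_nonneg x]
  -- key inequality
  have key : ∀ᶠ k in atTop, a k * c ≤ (R:ℝ) ^ 2 + (ω k) ^ 2 := by
    filter_upwards [hω] with k hk
    obtain ⟨hpos, heq⟩ := hk
    set w := ω k with hwdef
    have hden : (0:ℝ) < (R:ℝ) ^ 2 + w ^ 2 := by positivity
    have h1 : ∫ x in Icc (0:ℝ) R, w / (x ^ 2 + w ^ 2) ∂μ ≤ Ksin w := by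
      rw [hKsin w hpos]
      refine setIntegral_mono_set (hint w hpos) ?_ ?_
      · filter_upwards with x using by positivity
      · filter_upwards with x hx using hx.1
    have h2 : c * (w / ((R:ℝ) ^ 2 + w ^ 2)) ≤ ∫ x in Icc (0:ℝ) R, w / (x ^ 2 + w ^ 2) ∂μ := by
      have hconst : ∫ _x in Icc (0:ℝ) R, (w / ((R:ℝ) ^ 2 + w ^ 2)) ∂μ
          = c * (w / ((R:ℝ) ^ 2 + w ^ 2)) := by
        rw [setIntegral_const, smul_eq_mul]
        rfl
      rw [← hconst]
      refine setIntegral_mono_on (integrable_const _)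
        ((hint w hpos).mono_set (fun x hx => hx.1)) measurableSet_Icc ?_
      intro x hx
      have hx2 : x ^ 2 ≤ (R:ℝ) ^ 2 := by
        have h0 := hx.1
        have h1' := hx.2
        nlinarith
      gcongr
    have h3 : a k * (c * (w / ((R:ℝ) ^ 2 + w ^ 2))) ≤ w := by
      calc a k * (c * (w / ((R:ℝ) ^ 2 + w ^ 2)))
          ≤ a k * Ksin w := mul_le_mul_of_nonneg_left (h2.trans h1) (ha0 k).le
        _ = w := heq.symm
    have h4 : a k * c * w ≤ ((R:ℝ) ^ 2 + w ^ 2) * w := by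
      have h5 : a k * c * w / ((R:ℝ) ^ 2 + w ^ 2) ≤ w := by
        calc a k * c * w / ((R:ℝ) ^ 2 + w ^ 2)
            = a k * (c * (w / ((R:ℝ) ^ 2 + w ^ 2))) := by ring
          _ ≤ w := h3
      calc a k * c * w = (a k * c * w / ((R:ℝ) ^ 2 + w ^ 2)) * ((R:ℝ) ^ 2 + w ^ 2) := by
            field_simp
        _ ≤ w * ((R:ℝ) ^ 2 + w ^ 2) := mul_le_mul_of_nonneg_right h5 hden.le
        _ = ((R:ℝ) ^ 2 + w ^ 2) * w := mul_comm _ _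
    exact le_of_mul_le_mul_right h4 hpos
  -- ω tends to infinity
  have htop : Tendsto ω atTop atTop := by
    have h6 : Tendsto (fun k => a k * c - (R:ℝ) ^ 2) atTop atTop :=
      tendsto_atTop_add_const_right _ _ (hatop.atTop_mul_const hc)
    have h7 : Tendsto (fun k => Real.sqrt (a k * c - (R:ℝ) ^ 2)) atTop atTop :=
      aux_sqrt_atTop.comp h6
    refine tendsto_atTop_mono' atTop ?_ h7
    filter_upwards [key, hω] with k hk1 hk2
    calc Real.sqrt (a k * c - (R:ℝ) ^ 2) ≤ Real.sqrt ((ω k) ^ 2) :=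
          Real.sqrt_le_sqrt (by linarith)
      _ = ω k := Real.sqrt_sq hk2.1.le
  -- dominated convergence
  have hfinal : Tendsto (fun k => ∫ x in Ici (0:ℝ), (ω k) ^ 2 / (x ^ 2 + (ω k) ^ 2) ∂μ)
      atTop (nhds (∫ _x in Ici (0:ℝ), (1:ℝ) ∂μ)) := by
    refine tendsto_integral_filter_of_dominated_convergence (fun _ => (1:ℝ)) ?_ ?_
      (integrable_const 1) ?_
    · filter_upwards [hω] with k hk
      have hp := hk.1
      have : Continuous fun x : ℝ => (ω k) ^ 2 / (x ^ 2 + (ω k) ^ 2) :=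
        continuous_const.div ((continuous_pow 2).add continuous_const)
          (fun x => by positivity)
      exact this.aestronglyMeasurable
    · filter_upwards [hω] with k hk
      filter_upwards with x
      have hp := hk.1
      rw [Real.norm_eq_abs, abs_of_nonneg (by positivity)]
      rw [div_le_one (by positivity)]
      nlinarith [sq_nonneg x]
    · filter_upwards with x
      exact (aux_ratio_tendsto x).comp htop
  have hone : ∫ _x in Ici (0:ℝ), (1:ℝ) ∂μ = (μ (Ici 0)).toReal := by
    rw [setIntegral_const, smul_eq_mul, mul_one]
    rfl
  rw [hone] at hfinal
  refine hfinal.congr' ?_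
  filter_upwards [hω] with k hk
  obtain ⟨hpos, heq⟩ := hk
  have ha := (ha0 k).ne'
  have hmm : ω k * ω k = ω k * (a k * Ksin (ω k)) := by rw [← heq]
  have hstep : (ω k) ^ 2 / a k = ω k * Ksin (ω k) := by
    rw [pow_two, hmm]
    field_simp
  rw [hKsin (ω k) hpos, ← integral_const_mul] at hstep
  rw [hstep]
  refine integral_congr_ae (Eventually.of_forall fun x => ?_)
  simp only
  ring
end

section
/- Let μ be a nonzero finite positive measure on [0,∞), α > 0, and suppose ω₀ > 1 satisfies ω₀ = α · K_sin(ω₀), where K_sin(ω) = ∫₀^∞ ω/(x²+ω²) dμ(x). Then with c = K_sin(1)/(4 μ([0,∞))) > 0, for every q ∈ (0,1) and every ω ∈ [ω₀ − ω₀^q, ω₀ + ω₀^q] with ω > 0, one has |α·K_sin(ω)/ω − 1| ≥ (c/ω₀)|ω − ω₀|. -/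
open MeasureTheory Set

private lemma aux_cont (t : ℝ) (ht : 0 < t) :
    Continuous (fun x : ℝ => (x ^ 2 + t ^ 2)⁻¹) := by
  apply Continuous.inv₀ (by continuity)
  intro x; positivity

private lemma aux_integrable (ν : Measure ℝ) [IsFiniteMeasure ν] (t : ℝ) (ht : 0 < t) :
    Integrable (fun x : ℝ => (x ^ 2 + t ^ 2)⁻¹) ν := by
  refine Integrable.mono' (integrable_const ((t ^ 2)⁻¹)) ((aux_cont t ht).aestronglyMeasurable) ?_
  filter_upwards with x
  rw [Real.norm_eq_abs, abs_of_nonneg (by positivity)]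
  exact inv_anti₀ (by positivity) (by nlinarith)

private lemma aux_integrable2 (ν : Measure ℝ) [IsFiniteMeasure ν] (t s : ℝ)
    (ht : 0 < t) (hs : 0 < s) :
    Integrable (fun x : ℝ => (x ^ 2 + t ^ 2)⁻¹ * (x ^ 2 + s ^ 2)⁻¹) ν := by
  refine Integrable.mono' (integrable_const ((t ^ 2)⁻¹ * (s ^ 2)⁻¹))
    (((aux_cont t ht).mul (aux_cont s hs)).aestronglyMeasurable) ?_
  filter_upwards with x
  rw [Real.norm_eq_abs, abs_of_nonneg (by positivity)]
  have h1 : (x ^ 2 + t ^ 2)⁻¹ ≤ (t ^ 2)⁻¹ := inv_anti₀ (by positivity) (by nlinarith)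
  have h2 : (x ^ 2 + s ^ 2)⁻¹ ≤ (s ^ 2)⁻¹ := inv_anti₀ (by positivity) (by nlinarith)
  exact mul_le_mul h1 h2 (by positivity) (by positivity)

/-- Cauchy–Schwarz via the variance trick. -/
private lemma aux_cs (ν : Measure ℝ) [IsFiniteMeasure ν] (f : ℝ → ℝ)
    (hf : Integrable f ν) (hf2 : Integrable (fun x => f x ^ 2) ν) :
    (∫ x, f x ∂ν) ^ 2 ≤ (ν univ).toReal * ∫ x, f x ^ 2 ∂ν := by
  set M := (ν univ).toReal with hM
  set S := ∫ x, f x ∂ν with hS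
  set Q := ∫ x, f x ^ 2 ∂ν with hQ
  have hMnn : 0 ≤ M := ENNReal.toReal_nonneg
  rcases eq_or_lt_of_le hMnn with hM0 | hMpos
  · have hν : ν = 0 := by
      rcases (ENNReal.toReal_eq_zero_iff _).1 hM0.symm with h | h
      · exact Measure.measure_univ_eq_zero.mp h
      · exact absurd h (measure_ne_top ν univ)
    rw [hS, hQ, hν]
    simp
  · have hM' : M ≠ 0 := ne_of_gt hMpos
    have key : ∀ a : ℝ, 0 ≤ Q - 2 * a * S + a ^ 2 * M := by
      intro a
      have hexp : ∫ x, (f x - a) ^ 2 ∂ν = Q - 2 * a * S + a ^ 2 * M := by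
        have h1 : ∀ x, (f x - a) ^ 2 = (f x ^ 2 - 2 * a * f x) + a ^ 2 := fun x => by ring
        simp_rw [h1]
        rw [integral_add (by exact hf2.sub (hf.const_mul (2 * a))) (integrable_const _),
          integral_sub hf2 (by exact hf.const_mul (2 * a)), integral_const_mul, integral_const]
        simp only [smul_eq_mul, measureReal_def, ← hS, ← hQ, ← hM]
        ring
      have hnn := integral_nonneg (μ := ν) (f := fun x => (f x - a) ^ 2) (fun x => by positivity)
      linarith [hexp ▸ hnn]
    have h := key (S / M)
    have e : M * (Q - 2 * (S / M) * S + (S / M) ^ 2 * M) = M * Q - S ^ 2 := by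
      field_simp
      ring
    have h0 : 0 ≤ M * (Q - 2 * (S / M) * S + (S / M) ^ 2 * M) := mul_nonneg hMpos.le h
    rw [e] at h0
    linarith

set_option maxHeartbeats 1000000 in
/-- Quantitative lower bound near the resonance frequency: if `ω₀ > 1` satisfies
`ω₀ = α K_sin(ω₀)` with `K_sin(ω) = ∫₀^∞ ω/(x²+ω²) dμ(x)` for a nonzero finite
positive measure `μ` on `[0,∞)`, then with `c = K_sin(1)/(4 μ([0,∞)))` one has
`c > 0` and, for every `q ∈ (0,1)` and every positive
`ω ∈ [ω₀ − ω₀^q, ω₀ + ω₀^q]`, `|α K_sin(ω)/ω − 1| ≥ (c/ω₀)|ω − ω₀|`. -/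
theorem lower_bound_near_resonance
    (μ : Measure ℝ) [IsFiniteMeasure μ] (hμ : μ (Ici 0) ≠ 0)
    (Ksin : ℝ → ℝ)
    (hKsin : ∀ ω : ℝ, 0 < ω → Ksin ω = ∫ x in Ici 0, ω / (x ^ 2 + ω ^ 2) ∂μ)
    (α : ℝ) (hα : 0 < α) (ω₀ : ℝ) (hω₀ : 1 < ω₀)
    (hroot : ω₀ = α * Ksin ω₀)
    (c : ℝ) (hc : c = Ksin 1 / (4 * (μ (Ici 0)).toReal)) :
    0 < c ∧
      ∀ q ∈ Set.Ioo (0:ℝ) 1, ∀ ω : ℝ,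
        ω ∈ Set.Icc (ω₀ - ω₀ ^ q) (ω₀ + ω₀ ^ q) → 0 < ω →
          (c / ω₀) * |ω - ω₀| ≤ |α * Ksin ω / ω - 1| := by
  set ν := μ.restrict (Ici 0) with hν
  have hνuniv : ν univ = μ (Ici 0) := by
    rw [hν, Measure.restrict_apply_univ]
  set M := (μ (Ici 0)).toReal with hMdef
  have hMpos : 0 < M := by
    rw [hMdef]
    exact ENNReal.toReal_pos hμ (measure_ne_top μ _)
  set I : ℝ → ℝ := fun t => ∫ x, (x ^ 2 + t ^ 2)⁻¹ ∂ν with hI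
  have hω₀pos : (0:ℝ) < ω₀ := lt_trans one_pos hω₀
  -- Ksin t = t * I t for t > 0
  have hKI : ∀ t : ℝ, 0 < t → Ksin t = t * I t := by
    intro t ht
    rw [hKsin t ht, hI]
    simp only [div_eq_mul_inv]
    exact integral_const_mul t _
  -- From the root equation: α * I ω₀ = 1
  have hαI : α * I ω₀ = 1 := by
    have h := hroot
    rw [hKI ω₀ hω₀pos] at h
    have h2 : ω₀ * (α * I ω₀) = ω₀ * 1 := by linear_combination -h
    exact mul_left_cancel₀ (ne_of_gt hω₀pos) h2
  have hIω₀pos : 0 < I ω₀ := by nlinarith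
  -- I 1 positive
  have hint1 : Integrable (fun x : ℝ => (x ^ 2 + (1:ℝ) ^ 2)⁻¹) ν := aux_integrable ν 1 one_pos
  have hI1pos : 0 < I 1 := by
    rw [hI]
    rw [integral_pos_iff_support_of_nonneg (fun x => by positivity) hint1]
    have hsupp : Function.support (fun x : ℝ => (x ^ 2 + (1:ℝ) ^ 2)⁻¹) = univ := by
      ext x; simp only [Function.mem_support, mem_univ, iff_true]
      positivity
    rw [hsupp, hνuniv]
    exact lt_of_le_of_ne zero_le (Ne.symm hμ)
  have hKsin1 : Ksin 1 = I 1 := by rw [hKI 1 one_pos, one_mul]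
  have hcpos : 0 < c := by
    rw [hc, hKsin1]
    positivity
  refine ⟨hcpos, ?_⟩
  intro q hq ω hωmem hωpos
  have hωne : ω ≠ 0 := ne_of_gt hωpos
  -- ω ≤ 2 ω₀
  have hrq : ω₀ ^ q ≤ ω₀ := by
    have h := Real.rpow_le_rpow_of_exponent_le hω₀.le hq.2.le
    rwa [Real.rpow_one] at h
  have hωle : ω ≤ 2 * ω₀ := by
    have := hωmem.2; linarith
  -- the key integrals
  set J : ℝ := ∫ x, (x ^ 2 + ω ^ 2)⁻¹ * (x ^ 2 + ω₀ ^ 2)⁻¹ ∂ν with hJ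
  set Q : ℝ := ∫ x, (x ^ 2 + ω₀ ^ 2)⁻¹ * (x ^ 2 + ω₀ ^ 2)⁻¹ ∂ν with hQ
  have hintω : Integrable (fun x : ℝ => (x ^ 2 + ω ^ 2)⁻¹) ν := aux_integrable ν ω hωpos
  have hintω₀ : Integrable (fun x : ℝ => (x ^ 2 + ω₀ ^ 2)⁻¹) ν := aux_integrable ν ω₀ hω₀pos
  have hintJ : Integrable (fun x : ℝ => (x ^ 2 + ω ^ 2)⁻¹ * (x ^ 2 + ω₀ ^ 2)⁻¹) ν :=
    aux_integrable2 ν ω ω₀ hωpos hω₀pos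
  have hintQ : Integrable (fun x : ℝ => (x ^ 2 + ω₀ ^ 2)⁻¹ * (x ^ 2 + ω₀ ^ 2)⁻¹) ν :=
    aux_integrable2 ν ω₀ ω₀ hω₀pos hω₀pos
  -- difference formula
  have hdiff : I ω - I ω₀ = (ω₀ ^ 2 - ω ^ 2) * J := by
    rw [hI, hJ, ← integral_sub hintω hintω₀, ← integral_const_mul]
    congr 1
    funext x
    have ha : x ^ 2 + ω ^ 2 ≠ 0 := by positivity
    have hb : x ^ 2 + ω₀ ^ 2 ≠ 0 := by positivity
    field_simp
    ring
  -- main quantity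
  have hmain : α * Ksin ω / ω - 1 = α * ((ω₀ ^ 2 - ω ^ 2) * J) := by
    rw [hKI ω hωpos, ← hdiff, ← hαI]
    field_simp
  have hJnn : 0 ≤ J := by
    rw [hJ]; exact integral_nonneg fun x => by positivity
  -- lower bound on J
  have hJQ : Q / 4 ≤ J := by
    rw [hJ, hQ, div_eq_mul_inv, mul_comm, ← integral_const_mul]
    apply integral_mono (hintQ.const_mul _) hintJ
    intro x
    simp only
    have ha : (0:ℝ) < x ^ 2 + ω ^ 2 := by positivity
    have hb : (0:ℝ) < x ^ 2 + ω₀ ^ 2 := by positivity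
    have hinv : (4:ℝ)⁻¹ * (x ^ 2 + ω₀ ^ 2)⁻¹ ≤ (x ^ 2 + ω ^ 2)⁻¹ := by
      rw [← mul_inv]
      exact inv_anti₀ ha (by nlinarith)
    calc (4:ℝ)⁻¹ * ((x ^ 2 + ω₀ ^ 2)⁻¹ * (x ^ 2 + ω₀ ^ 2)⁻¹)
        = ((4:ℝ)⁻¹ * (x ^ 2 + ω₀ ^ 2)⁻¹) * (x ^ 2 + ω₀ ^ 2)⁻¹ := by ring
      _ ≤ (x ^ 2 + ω ^ 2)⁻¹ * (x ^ 2 + ω₀ ^ 2)⁻¹ :=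
          mul_le_mul_of_nonneg_right hinv (by positivity)
  -- Cauchy-Schwarz: (I ω₀)^2 ≤ M * Q
  have hCS : (I ω₀) ^ 2 ≤ M * Q := by
    have h := aux_cs ν (fun x => (x ^ 2 + ω₀ ^ 2)⁻¹) hintω₀
      (by simpa [pow_two] using hintQ)
    rw [hνuniv] at h
    simpa [hI, hQ, pow_two, hMdef] using h
  -- I 1 ≤ ω₀^2 * I ω₀
  have hI1le : I 1 ≤ ω₀ ^ 2 * I ω₀ := by
    rw [hI, ← integral_const_mul]
    apply integral_mono hint1 (hintω₀.const_mul _)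
    intro x
    simp only
    have hb : (0:ℝ) < x ^ 2 + ω₀ ^ 2 := by positivity
    have hd : (0:ℝ) < (x ^ 2 + ω₀ ^ 2) / ω₀ ^ 2 := by positivity
    have hle : (x ^ 2 + ω₀ ^ 2) / ω₀ ^ 2 ≤ x ^ 2 + 1 ^ 2 := by
      rw [div_le_iff₀ (by positivity)]
      nlinarith [mul_nonneg (sq_nonneg x) (by nlinarith : (0:ℝ) ≤ ω₀ ^ 2 - 1)]
    have h := inv_anti₀ hd hle
    rwa [inv_div, div_eq_mul_inv] at h
  -- α * I 1 ≤ ω₀^2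
  have hαI1 : α * I 1 ≤ ω₀ ^ 2 := by
    have h1 := mul_le_mul_of_nonneg_left hI1le hα.le
    have h2 : α * (ω₀ ^ 2 * I ω₀) = ω₀ ^ 2 := by linear_combination ω₀ ^ 2 * hαI
    linarith
  -- 1 ≤ α^2 M Q
  have hQlb : 1 ≤ α ^ 2 * M * Q := by
    have h1 : α ^ 2 * (I ω₀) ^ 2 = 1 := by linear_combination (α * I ω₀ + 1) * hαI
    have h2 := mul_le_mul_of_nonneg_left hCS (sq_nonneg α)
    calc (1:ℝ) = α ^ 2 * (I ω₀) ^ 2 := h1.symm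
      _ ≤ α ^ 2 * (M * Q) := h2
      _ = α ^ 2 * M * Q := by ring
  have hQnn : 0 ≤ Q := by
    rw [hQ]; exact integral_nonneg fun x => by positivity
  -- I 1 ≤ α ω₀² M Q
  have hkey2 : I 1 ≤ α * ω₀ ^ 2 * M * Q := by
    have hchain : α * I 1 ≤ α * (α * ω₀ ^ 2 * M * Q) :=
      calc α * I 1 ≤ ω₀ ^ 2 := hαI1
        _ ≤ ω₀ ^ 2 * (α ^ 2 * M * Q) := le_mul_of_one_le_right (by positivity) hQlb
        _ = α * (α * ω₀ ^ 2 * M * Q) := by ring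
    exact (mul_le_mul_iff_right₀ hα).1 hchain
  -- absolute value formula
  have habs : |α * Ksin ω / ω - 1| = α * (|ω - ω₀| * (ω₀ + ω)) * J := by
    rw [hmain, abs_mul, abs_mul, abs_of_pos hα, abs_of_nonneg hJnn]
    have h : |ω₀ ^ 2 - ω ^ 2| = |ω - ω₀| * (ω₀ + ω) := by
      rw [← abs_of_nonneg (a := ω₀ + ω) (by linarith), ← abs_mul, abs_sub_comm]
      congr 1
      ring
    rw [h]
    ring
  rw [habs]
  have hfinal : c / ω₀ ≤ α * ω₀ * Q / 4 := by
    rw [hc, hKsin1, div_div, div_le_div_iff₀ (by positivity) (by positivity)]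
    calc I 1 * 4 ≤ (α * ω₀ ^ 2 * M * Q) * 4 := by linarith
      _ = α * ω₀ * Q * (4 * M * ω₀) := by ring
  calc c / ω₀ * |ω - ω₀| ≤ (α * ω₀ * Q / 4) * |ω - ω₀| :=
        mul_le_mul_of_nonneg_right hfinal (abs_nonneg _)
    _ = α * (|ω - ω₀| * ω₀) * (Q / 4) := by ring
    _ ≤ α * (|ω - ω₀| * ω₀) * J :=
        mul_le_mul_of_nonneg_left hJQ (by positivity)
    _ ≤ α * (|ω - ω₀| * (ω₀ + ω)) * J := by
        apply mul_le_mul_of_nonneg_right _ hJnn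
        nlinarith [mul_nonneg (mul_nonneg hα.le (abs_nonneg (ω - ω₀))) hωpos.le]
end

section
/- Let μ be a nonzero finite positive measure on [0,∞) and α > 0. There exists r > 0 such that for all z = u − iv in the closed lower half-plane with v ≥ 0, (u,v) ≠ (0,0), |u| ≤ 1, |v| ≤ 1, and |z| < r, one has |α ∫₀^∞ 1/(iz+x) dμ(x) + iz| ≥ (α/(4√2)) ∫₀^∞ 1/(x+1) dμ(x) > 0. -/
open MeasureTheory Set

lemma abs_re_add_abs_im_le_sqrt_two_mul_abs' (ζ : ℂ) :
    |ζ.re| + |ζ.im| ≤ Real.sqrt 2 * ‖ζ‖ := by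
  have h2 : Real.sqrt 2 * ‖ζ‖ = Real.sqrt (2 * (‖ζ‖) ^ 2) := by
    rw [Real.sqrt_mul (by norm_num), Real.sqrt_sq (norm_nonneg ζ)]
  rw [h2]
  rw [show (2 : ℝ) * (‖ζ‖) ^ 2 = 2 * (ζ.re ^ 2 + ζ.im ^ 2) by
    rw [Complex.sq_norm, Complex.normSq_apply]; ring]
  apply Real.le_sqrt_of_sq_le
  nlinarith [sq_abs ζ.re, sq_abs ζ.im, sq_nonneg (|ζ.re| - |ζ.im|)]

set_option maxHeartbeats 1600000 in
/-- For a nonzero finite positive measure `μ` and `α > 0` ... -/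
theorem denominator_bounded_below_near_origin
    (μ : Measure ℝ) [IsFiniteMeasure μ] (hμ : μ (Ici 0) ≠ 0)
    (α : ℝ) (hα : 0 < α) :
    ∃ r : ℝ, 0 < r ∧
      (0 < α / (4 * Real.sqrt 2) * ∫ x in Ici 0, 1 / (x + 1) ∂μ) ∧
      ∀ u v : ℝ, 0 ≤ v → (u, v) ≠ (0, 0) → |u| ≤ 1 → |v| ≤ 1 →
        ‖(u : ℂ) - v * Complex.I‖ < r →
          α / (4 * Real.sqrt 2) * (∫ x in Ici 0, 1 / (x + 1) ∂μ)
            ≤ ‖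
                ((α : ℂ) * (∫ x in Ici 0, 1 / (Complex.I * ((u : ℂ) - v * Complex.I) + x) ∂μ)
                  + Complex.I * ((u : ℂ) - v * Complex.I))‖ := by
  have hmeas : MeasurableSet (Ici (0:ℝ)) := measurableSet_Ici
  set C := ∫ x in Ici 0, 1 / (x + 1) ∂μ with hCdef
  have hint1 : IntegrableOn (fun x : ℝ => 1 / (x + 1)) (Ici 0) μ := by
    refine Measure.integrableOn_of_bounded (M := 1) (measure_ne_top μ _) ?_ ?_
    · have : Measurable fun x : ℝ => (x + 1)⁻¹ := (measurable_id.add_const 1).inv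
      simpa [one_div] using this.aestronglyMeasurable
    · filter_upwards [self_mem_ae_restrict hmeas] with x hx
      have hx0 : (0:ℝ) ≤ x := hx
      rw [Real.norm_eq_abs, abs_of_nonneg (by positivity)]
      rw [div_le_one (by linarith)]; linarith
  have hCpos : 0 < C := by
    rw [hCdef, setIntegral_pos_iff_support_of_nonneg_ae]
    · have hsub : Ici (0:ℝ) ⊆ Function.support fun x : ℝ => 1 / (x + 1) := by
        intro x hx
        have hx0 : (0:ℝ) ≤ x := hx
        simp only [Function.mem_support]
        positivity
      rw [Set.inter_eq_right.mpr hsub]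
      exact hμ.bot_lt
    · filter_upwards [self_mem_ae_restrict hmeas] with x hx
      have hx0 : (0:ℝ) ≤ x := hx
      positivity
    · exact hint1
  have hsqrt2 : (0:ℝ) < Real.sqrt 2 := by positivity
  have hr2 : 0 < α * C / 4 := by positivity
  refine ⟨min 1 (α * C / 4), lt_min one_pos hr2, mul_pos (by positivity : 0 < α / (4 * Real.sqrt 2)) hCpos, ?_⟩
  intro u v hv hne hu1 hv1 hzr
  set z : ℂ := (u : ℂ) - v * Complex.I with hzdef
  have hzre : z.re = u := by simp [hzdef]
  have hzim : z.im = -v := by simp [hzdef]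
  have huv : u ≠ 0 ∨ v ≠ 0 := by
    by_contra h; push_neg at h; exact hne (by simp [h.1, h.2])
  have hq : 0 < u ^ 2 + v ^ 2 := by
    rcases huv with h | h
    · have h2 : 0 < u ^ 2 := lt_of_le_of_ne (sq_nonneg u) (Ne.symm (pow_ne_zero 2 h))
      linarith [sq_nonneg v]
    · have h2 : 0 < v ^ 2 := lt_of_le_of_ne (sq_nonneg v) (Ne.symm (pow_ne_zero 2 h))
      linarith [sq_nonneg u]
  have habs2 : (‖z‖) ^ 2 = u ^ 2 + v ^ 2 := by
    rw [Complex.sq_norm, Complex.normSq_apply, hzre, hzim]; ring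
  have hspos : 0 < ‖z‖ := by
    nlinarith [norm_nonneg z]
  have hwre : (Complex.I * z).re = v := by
    simp [Complex.mul_re, hzre, hzim]
  have hwim : (Complex.I * z).im = u := by
    simp [Complex.mul_im, hzre, hzim]
  have hDpos : ∀ x ∈ Ici (0:ℝ), 0 < (x + v) ^ 2 + u ^ 2 := by
    intro x hx
    have hx0 : (0:ℝ) ≤ x := hx
    nlinarith [mul_nonneg hx0 hv]
  have hnormSq : ∀ x : ℝ, Complex.normSq (Complex.I * z + x) = (x + v) ^ 2 + u ^ 2 := by
    intro x
    rw [Complex.normSq_apply]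
    simp only [Complex.add_re, Complex.add_im, Complex.ofReal_re, Complex.ofReal_im,
      hwre, hwim]
    ring
  have habsW : ∀ x ∈ Ici (0:ℝ), ‖z‖ ≤ ‖Complex.I * z + x‖ := by
    intro x hx
    have hx0 : (0:ℝ) ≤ x := hx
    have hW2 : (‖Complex.I * z + x‖) ^ 2 = (x + v) ^ 2 + u ^ 2 := by
      rw [Complex.sq_norm, hnormSq]
    nlinarith [norm_nonneg (Complex.I * z + x), mul_nonneg hx0 hv]
  have hgint : IntegrableOn (fun x : ℝ => 1 / (Complex.I * z + (x:ℂ))) (Ici 0) μ := by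
    refine Measure.integrableOn_of_bounded (M := 1 / ‖z‖) (measure_ne_top μ _) ?_ ?_
    · have : Measurable fun x : ℝ => (Complex.I * z + (x:ℂ))⁻¹ :=
        (Complex.measurable_ofReal.const_add _).inv
      simpa [one_div] using this.aestronglyMeasurable
    · filter_upwards [self_mem_ae_restrict hmeas] with x hx
      rw [norm_div, norm_one]
      exact one_div_le_one_div_of_le hspos (habsW x hx)
  set T1 := ∫ x in Ici 0, (x + v) / ((x + v) ^ 2 + u ^ 2) ∂μ with hT1def
  set T2 := ∫ x in Ici 0, 1 / ((x + v) ^ 2 + u ^ 2) ∂μ with hT2def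
  have hf1int : IntegrableOn (fun x : ℝ => (x + v) / ((x + v) ^ 2 + u ^ 2)) (Ici 0) μ := by
    refine Measure.integrableOn_of_bounded (M := 1 / ‖z‖) (measure_ne_top μ _) ?_ ?_
    · have : Measurable fun x : ℝ => (x + v) * ((x + v) ^ 2 + u ^ 2)⁻¹ :=
        (measurable_id.add_const v).mul
          (((measurable_id.add_const v).pow_const 2).add_const (u ^ 2)).inv
      simpa [div_eq_mul_inv] using this.aestronglyMeasurable
    · filter_upwards [self_mem_ae_restrict hmeas] with x hx
      have hx0 : (0:ℝ) ≤ x := hx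
      have hD := hDpos x hx
      rw [Real.norm_eq_abs, abs_of_nonneg (by positivity)]
      rw [div_le_div_iff₀ hD hspos]
      nlinarith [sq_nonneg (x + v - ‖z‖), mul_nonneg hx0 hv]
  have hf2int : IntegrableOn (fun x : ℝ => 1 / ((x + v) ^ 2 + u ^ 2)) (Ici 0) μ := by
    refine Measure.integrableOn_of_bounded (M := 1 / (‖z‖) ^ 2) (measure_ne_top μ _) ?_ ?_
    · have : Measurable fun x : ℝ => (((x + v) ^ 2 + u ^ 2))⁻¹ :=
        (((measurable_id.add_const v).pow_const 2).add_const (u ^ 2)).inv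
      simpa [one_div] using this.aestronglyMeasurable
    · filter_upwards [self_mem_ae_restrict hmeas] with x hx
      have hx0 : (0:ℝ) ≤ x := hx
      have hD := hDpos x hx
      rw [Real.norm_eq_abs, abs_of_nonneg (by positivity)]
      apply one_div_le_one_div_of_le (by positivity)
      nlinarith [mul_nonneg hx0 hv]
  have hT1nn : 0 ≤ T1 := by
    apply setIntegral_nonneg hmeas
    intro x hx
    have hx0 : (0:ℝ) ≤ x := hx
    exact div_nonneg (by linarith) (hDpos x hx).le
  have hT2nn : 0 ≤ T2 := by
    apply setIntegral_nonneg hmeas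
    intro x hx
    exact div_nonneg one_pos.le (hDpos x hx).le
  -- re and im of the complex integral
  have hIre : (∫ x in Ici 0, 1 / (Complex.I * z + (x:ℂ)) ∂μ).re = T1 := by
    have h := integral_re hgint
    simp only [RCLike.re_to_complex] at h
    rw [← h, hT1def]
    apply setIntegral_congr_fun hmeas
    intro x hx
    simp only [one_div, Complex.inv_re, hnormSq, Complex.add_re, Complex.ofReal_re, hwre]
    ring
  have hIim : (∫ x in Ici 0, 1 / (Complex.I * z + (x:ℂ)) ∂μ).im = -u * T2 := by
    have h := integral_im hgint
    simp only [RCLike.im_to_complex] at h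
    rw [← h, hT2def, ← integral_const_mul]
    apply setIntegral_congr_fun hmeas
    intro x hx
    simp only [one_div, Complex.inv_im, hnormSq, Complex.add_im, Complex.ofReal_im, hwim]
    ring
  set ζ : ℂ := (α : ℂ) * (∫ x in Ici 0, 1 / (Complex.I * z + (x:ℂ)) ∂μ) + Complex.I * z
    with hζdef
  have hζre : ζ.re = α * T1 + v := by
    rw [hζdef, Complex.add_re, Complex.mul_re, hIre, hIim, hwre]
    simp only [Complex.ofReal_re, Complex.ofReal_im]
    ring
  have hζim : ζ.im = α * (-u * T2) + u := by
    rw [hζdef, Complex.add_im, Complex.mul_im, hIre, hIim, hwim]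
    simp only [Complex.ofReal_re, Complex.ofReal_im]
    ring
  -- key integral lower bound
  have hkey : (1 / 2) * C ≤ T1 + |u| * T2 := by
    have hsum : T1 + |u| * T2
        = ∫ x in Ici 0, ((x + v) / ((x + v) ^ 2 + u ^ 2)
            + |u| * (1 / ((x + v) ^ 2 + u ^ 2))) ∂μ := by
      rw [integral_add hf1int (hf2int.const_mul _), hT1def, hT2def, ← integral_const_mul]
    have hhalf : (1 / 2) * C = ∫ x in Ici 0, (1 / 2) * (1 / (x + 1)) ∂μ := by
      rw [hCdef, ← integral_const_mul]
    rw [hsum, hhalf]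
    apply setIntegral_mono_on (hint1.const_mul _) (hf1int.add (hf2int.const_mul _)) hmeas
    intro x hx
    have hx0 : (0:ℝ) ≤ x := hx
    have hD := hDpos x hx
    have hv2 : v ≤ 1 := (abs_le.mp hv1).2
    simp only [Pi.add_apply]
    rw [mul_one_div, mul_one_div, ← add_div,
      div_le_div_iff₀ (by linarith : (0:ℝ) < x + 1) hD]
    nlinarith [sq_abs u, abs_nonneg u, mul_nonneg hx0 (abs_nonneg u)]
  -- |u| is small
  have hus : |u| ≤ ‖z‖ := by
    have h := Complex.abs_re_le_norm z
    rwa [hzre] at h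
  have huB : |u| < α * C / 4 := lt_of_le_of_lt hus (lt_of_lt_of_le hzr (min_le_right _ _))
  -- lower bounds on re/im
  have him_lb : |u| * (α * T2) - |u| ≤ |ζ.im| := by
    have heq : |ζ.im| = |u| * |1 - α * T2| := by
      rw [hζim, show α * (-u * T2) + u = u * (1 - α * T2) by ring, abs_mul]
    rw [heq]
    have h := mul_le_mul_of_nonneg_left (neg_le_abs (1 - α * T2)) (abs_nonneg u)
    linarith [h]
  have hre_lb : α * T1 ≤ |ζ.re| := by
    rw [hζre]
    have : α * T1 + v ≤ |α * T1 + v| := le_abs_self _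
    have h0 : 0 ≤ α * T1 := mul_nonneg hα.le hT1nn
    calc α * T1 ≤ α * T1 + v := by linarith
      _ ≤ |α * T1 + v| := le_abs_self _
  have hmain : α * C / 4 ≤ |ζ.re| + |ζ.im| := by
    have h1 : α * ((1 / 2) * C) ≤ α * (T1 + |u| * T2) :=
      mul_le_mul_of_nonneg_left hkey hα.le
    linarith [him_lb, hre_lb, huB]
  have hfin : α * C / 4 ≤ Real.sqrt 2 * ‖ζ‖ :=
    le_trans hmain (abs_re_add_abs_im_le_sqrt_two_mul_abs' ζ)
  have hgoal : α / (4 * Real.sqrt 2) * C ≤ ‖ζ‖ := by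
    rw [show α / (4 * Real.sqrt 2) * C = (α * C / 4) / Real.sqrt 2 by
      rw [div_mul_eq_mul_div, div_div]]
    rw [div_le_iff₀ hsqrt2]
    linarith [hfin, mul_comm (Real.sqrt 2) (‖ζ‖)]
  exact hgoal
end

section
/- Let μ be a nonzero finite positive measure on [0,∞), α ≥ 1, and let K_cos(ω) = ∫₀^∞ x/(x²+ω²) dμ(x), K_sin(ω) = ∫₀^∞ ω/(x²+ω²) dμ(x). Then for every β ∈ (0,1), the integral ∫₀^∞ ω^β K_cos(ω) / (α² K_cos(ω)² + (ω − α K_sin(ω))²) dω is finite. -/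
open MeasureTheory Set

lemma aux_key1 {α cv gv sv ω T β : ℝ} (hα0 : 0 < α) (hc : 0 < cv) (hg : cv ≤ gv)
    (hω0 : 0 < ω) (hωT : ω ≤ T) (hβ0 : 0 ≤ β) :
    ω ^ β * gv / (α ^ 2 * gv ^ 2 + (ω - α * sv) ^ 2) ≤ T ^ β / (α ^ 2 * cv) := by
  have hg0 : 0 < gv := lt_of_lt_of_le hc hg
  have hT0 : 0 < T := lt_of_lt_of_le hω0 hωT
  have h1 : ω ^ β ≤ T ^ β := Real.rpow_le_rpow hω0.le hωT hβ0
  have step : ω ^ β * gv / (α ^ 2 * gv ^ 2 + (ω - α * sv) ^ 2)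
      ≤ (T ^ β * gv) / (α ^ 2 * cv * gv) := by
    refine div_le_div₀ (mul_nonneg (Real.rpow_nonneg hT0.le β) hg0.le) ?_
      (mul_pos (mul_pos (pow_pos hα0 2) hc) hg0) ?_
    · nlinarith
    · nlinarith [sq_nonneg (ω - α * sv), mul_le_mul_of_nonneg_left hg
        (mul_nonneg (sq_nonneg α) hg0.le)]
  refine le_trans step (le_of_eq ?_)
  rw [mul_div_mul_right _ _ (ne_of_gt hg0)]

lemma aux_key2 {α C gv sv ω β : ℝ} (hC0 : 0 ≤ C) (hg0 : 0 ≤ gv)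
    (hgub : gv ≤ 1 / (2 * ω) * C) (hsub : ω / 2 ≤ ω - α * sv) (hω0 : 0 < ω) :
    ω ^ β * gv / (α ^ 2 * gv ^ 2 + (ω - α * sv) ^ 2) ≤ 2 * C * ω ^ (β - 3) := by
  have step : ω ^ β * gv / (α ^ 2 * gv ^ 2 + (ω - α * sv) ^ 2)
      ≤ (ω ^ β * (1 / (2 * ω) * C)) / ((ω / 2) ^ 2) := by
    refine div_le_div₀ (mul_nonneg (Real.rpow_nonneg hω0.le β)
        (mul_nonneg (by positivity) hC0)) ?_
      (pow_pos (by linarith) 2) ?_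
    · exact mul_le_mul_of_nonneg_left hgub (Real.rpow_nonneg hω0.le β)
    · nlinarith [sq_nonneg (α * gv), hsub, hω0]
  refine le_trans step (le_of_eq ?_)
  rw [Real.rpow_sub hω0, show (3:ℝ) = ((3:ℕ):ℝ) by norm_num, Real.rpow_natCast]
  field_simp

lemma aux_cos_norm_bound {x ω : ℝ} (hω : 0 < ω) : ‖x / (x ^ 2 + ω ^ 2)‖ ≤ 1 / (2 * ω) := by
  have hd : 0 < x ^ 2 + ω ^ 2 := by positivity
  rw [Real.norm_eq_abs, abs_div, abs_of_pos hd, div_le_div_iff₀ hd (by positivity)]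
  nlinarith [sq_nonneg (|x| - ω), sq_abs x, abs_nonneg x]

lemma aux_sin_norm_bound {x ω : ℝ} (hω : 0 < ω) : ‖ω / (x ^ 2 + ω ^ 2)‖ ≤ 1 / ω := by
  have hd : 0 < x ^ 2 + ω ^ 2 := by positivity
  rw [Real.norm_eq_abs, abs_div, abs_of_pos hd, abs_of_pos hω, div_le_div_iff₀ hd hω]
  nlinarith [sq_nonneg x]

lemma aux_cos_integrable (μ : Measure ℝ) [IsFiniteMeasure μ] {ω : ℝ} (hω : 0 < ω) :
    Integrable (fun x : ℝ => x / (x ^ 2 + ω ^ 2)) μ := by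
  refine (integrable_const (1 / (2 * ω))).mono' ?_ ?_
  · exact (by measurability : Measurable fun x : ℝ => x / (x ^ 2 + ω ^ 2)).aestronglyMeasurable
  · exact Filter.Eventually.of_forall fun x => aux_cos_norm_bound hω

lemma aux_meas_g (μ : Measure ℝ) [IsFiniteMeasure μ] :
    Measurable fun ω : ℝ => ∫ x in Ici 0, x / (x ^ 2 + ω ^ 2) ∂μ := by
  have h : StronglyMeasurable fun p : ℝ × ℝ => p.2 / (p.2 ^ 2 + p.1 ^ 2) :=
    (by measurability : Measurable fun p : ℝ × ℝ => p.2 / (p.2 ^ 2 + p.1 ^ 2)).stronglyMeasurable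
  exact h.integral_prod_right'.measurable

lemma aux_meas_s (μ : Measure ℝ) [IsFiniteMeasure μ] :
    Measurable fun ω : ℝ => ∫ x in Ici 0, ω / (x ^ 2 + ω ^ 2) ∂μ := by
  have h : StronglyMeasurable fun p : ℝ × ℝ => p.1 / (p.2 ^ 2 + p.1 ^ 2) :=
    (by measurability : Measurable fun p : ℝ × ℝ => p.1 / (p.2 ^ 2 + p.1 ^ 2)).stronglyMeasurable
  exact h.integral_prod_right'.measurable

/-- For a nonzero finite positive measure `μ` on `[0,∞)`, `α ≥ 1`, and every
`β ∈ (0,1)`, the integral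
`∫₀^∞ ω^β K_cos(ω) / (α² K_cos(ω)² + (ω − α K_sin(ω))²) dω` is finite, where
`K_cos(ω) = ∫₀^∞ x/(x²+ω²) dμ(x)` and `K_sin(ω) = ∫₀^∞ ω/(x²+ω²) dμ(x)`. -/
theorem weighted_spectral_integral_finite
    (μ : Measure ℝ) [IsFiniteMeasure μ] (hμ : μ (Ici 0) ≠ 0)
    (α : ℝ) (hα : 1 ≤ α)
    (Kcos Ksin : ℝ → ℝ)
    (hKcos : ∀ ω : ℝ, 0 < ω → Kcos ω = ∫ x in Ici 0, x / (x ^ 2 + ω ^ 2) ∂μ)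
    (hKsin : ∀ ω : ℝ, 0 < ω → Ksin ω = ∫ x in Ici 0, ω / (x ^ 2 + ω ^ 2) ∂μ)
    (β : ℝ) (hβ : β ∈ Set.Ioo (0:ℝ) 1) :
    IntegrableOn
      (fun ω : ℝ =>
        ω ^ β * Kcos ω / (α ^ 2 * Kcos ω ^ 2 + (ω - α * Ksin ω) ^ 2))
      (Ioi 0) := by
  obtain ⟨hβ0, hβ1⟩ := hβ
  have hα0 : (0:ℝ) < α := lt_of_lt_of_le one_pos hα
  obtain ⟨g, hg_def⟩ : ∃ g : ℝ → ℝ, g = fun ω => ∫ x in Ici 0, x / (x ^ 2 + ω ^ 2) ∂μ :=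
    ⟨_, rfl⟩
  obtain ⟨s, hs_def⟩ : ∃ s : ℝ → ℝ, s = fun ω => ∫ x in Ici 0, ω / (x ^ 2 + ω ^ 2) ∂μ :=
    ⟨_, rfl⟩
  obtain ⟨F, hF_def⟩ : ∃ F : ℝ → ℝ,
      F = fun ω => ω ^ β * g ω / (α ^ 2 * g ω ^ 2 + (ω - α * s ω) ^ 2) := ⟨_, rfl⟩
  have hcongr : EqOn (fun ω : ℝ =>
      ω ^ β * Kcos ω / (α ^ 2 * Kcos ω ^ 2 + (ω - α * Ksin ω) ^ 2)) F (Ioi 0) := by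
    intro ω hω
    simp only [hF_def, hg_def, hs_def, hKcos ω hω, hKsin ω hω]
  rw [integrableOn_congr_fun hcongr measurableSet_Ioi]
  have hg_nonneg : ∀ ω : ℝ, 0 ≤ g ω := by
    intro ω
    rw [hg_def]
    refine setIntegral_nonneg measurableSet_Ici fun x hx => ?_
    exact div_nonneg hx (by positivity)
  have hs_nonneg : ∀ ω : ℝ, 0 < ω → 0 ≤ s ω := by
    intro ω hω
    rw [hs_def]
    refine setIntegral_nonneg measurableSet_Ici fun x hx => ?_
    exact div_nonneg hω.le (by positivity)
  obtain ⟨C, hC_def⟩ : ∃ C : ℝ, C = (μ (Ici 0)).toReal := ⟨_, rfl⟩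
  have hC0 : 0 ≤ C := hC_def ▸ ENNReal.toReal_nonneg
  have hg_ub : ∀ ω : ℝ, 0 < ω → g ω ≤ 1 / (2 * ω) * C := by
    intro ω hω
    have h := norm_integral_le_of_norm_le_const (μ := μ.restrict (Ici 0))
      (f := fun x : ℝ => x / (x ^ 2 + ω ^ 2)) (C := 1 / (2 * ω))
      (Filter.Eventually.of_forall fun x => aux_cos_norm_bound hω)
    rw [measureReal_restrict_apply_univ] at h
    rw [hg_def, hC_def]
    exact le_trans (le_abs_self _) h
  have hs_ub : ∀ ω : ℝ, 0 < ω → s ω ≤ 1 / ω * C := by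
    intro ω hω
    have h := norm_integral_le_of_norm_le_const (μ := μ.restrict (Ici 0))
      (f := fun x : ℝ => ω / (x ^ 2 + ω ^ 2)) (C := 1 / ω)
      (Filter.Eventually.of_forall fun x => aux_sin_norm_bound hω)
    rw [measureReal_restrict_apply_univ] at h
    rw [hs_def, hC_def]
    exact le_trans (le_abs_self _) h
  have hgmeas : Measurable g := hg_def ▸ aux_meas_g μ
  have hsmeas : Measurable s := hs_def ▸ aux_meas_s μ
  have hFmeas : Measurable F := by
    rw [hF_def]
    apply Measurable.div
    · exact ((by measurability : Measurable fun ω : ℝ => ω ^ β).mul hgmeas)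
    · apply Measurable.add
      · exact (measurable_const.mul (hgmeas.pow measurable_const))
      · exact ((measurable_id.sub (measurable_const.mul hsmeas)).pow measurable_const)
  have hF_nonneg : ∀ ω : ℝ, 0 < ω → 0 ≤ F ω := by
    intro ω hω
    rw [hF_def]
    have h1 : 0 ≤ g ω := hg_nonneg ω
    have h2 : 0 ≤ ω ^ β := Real.rpow_nonneg hω.le β
    positivity
  by_cases hpos : μ (Ioi 0) = 0
  · -- μ concentrated at {0}: g ≡ 0, so F ≡ 0
    have hgz : ∀ ω : ℝ, g ω = 0 := by
      intro ω
      rw [hg_def]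
      have h1 : ∀ᵐ x ∂μ.restrict (Ici 0), x ∈ Ici (0:ℝ) := ae_restrict_mem measurableSet_Ici
      have hres : μ.restrict (Ici 0) (Ioi 0) = 0 := by
        rw [Measure.restrict_apply measurableSet_Ioi,
          inter_eq_self_of_subset_left Ioi_subset_Ici_self]
        exact hpos
      have h2 : ∀ᵐ x ∂μ.restrict (Ici 0), x ∉ Ioi (0:ℝ) :=
        measure_eq_zero_iff_ae_notMem.mp hres
      have hae : (fun x : ℝ => x / (x ^ 2 + ω ^ 2)) =ᵐ[μ.restrict (Ici 0)] 0 := by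
        filter_upwards [h1, h2] with x hx1 hx2
        have hx0 : x = 0 := le_antisymm (not_lt.mp hx2) hx1
        simp [hx0]
      exact integral_eq_zero_of_ae hae
    have hFz : F = fun _ : ℝ => (0:ℝ) := by
      rw [hF_def]
      funext ω
      simp [hgz ω]
    rw [hFz]
    exact (integrableOn_const_iff).mpr (Or.inl enorm_zero)
  · -- main case: find R with μ (Ioc 0 R) > 0
    have hU : Ioi (0:ℝ) ⊆ ⋃ n : ℕ, Ioc (0:ℝ) n := by
      intro x hx
      obtain ⟨n, hn⟩ := exists_nat_ge x
      exact mem_iUnion.mpr ⟨n, hx, hn⟩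
    have hex : ∃ n : ℕ, μ (Ioc (0:ℝ) n) ≠ 0 := by
      by_contra h
      push_neg at h
      exact hpos (le_antisymm (le_trans (measure_mono hU)
        (le_of_eq (measure_iUnion_null_iff.mpr h))) zero_le)
    obtain ⟨n, hn⟩ := hex
    obtain ⟨R, hR_def⟩ : ∃ R : ℝ, R = (n:ℝ) := ⟨_, rfl⟩
    rw [← hR_def] at hn
    obtain ⟨T, hT_def⟩ : ∃ T : ℝ, T = 1 + Real.sqrt (2 * α * C) := ⟨_, rfl⟩
    have hT1 : (1:ℝ) ≤ T := hT_def ▸ le_add_of_nonneg_right (Real.sqrt_nonneg _)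
    have hT0 : (0:ℝ) < T := lt_of_lt_of_le one_pos hT1
    have hT_sq : 2 * α * C ≤ T ^ 2 := by
      have h2 : Real.sqrt (2 * α * C) ^ 2 = 2 * α * C := Real.sq_sqrt (by positivity)
      rw [hT_def]
      nlinarith [Real.sqrt_nonneg (2 * α * C)]
    obtain ⟨c, hc_def⟩ : ∃ c : ℝ, c = ∫ x in Ioc (0:ℝ) R, x / (x ^ 2 + T ^ 2) ∂μ := ⟨_, rfl⟩
    have hInt_T : IntegrableOn (fun x : ℝ => x / (x ^ 2 + T ^ 2)) (Ioc 0 R) μ :=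
      (aux_cos_integrable μ hT0).integrableOn
    have hc_pos : 0 < c := by
      rw [hc_def]
      rw [setIntegral_pos_iff_support_of_nonneg_ae ?_ hInt_T]
      · have hsub : Ioc (0:ℝ) R ⊆ Function.support fun x : ℝ => x / (x ^ 2 + T ^ 2) := by
          intro x hx
          have : 0 < x / (x ^ 2 + T ^ 2) := div_pos hx.1 (by positivity)
          exact ne_of_gt this
        rw [inter_eq_self_of_subset_right hsub]
        exact hn.bot_lt
      · filter_upwards [ae_restrict_mem measurableSet_Ioc] with x hx
        exact div_nonneg hx.1.le (by positivity)
    have hg_lb : ∀ ω : ℝ, 0 < ω → ω ≤ T → c ≤ g ω := by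
      intro ω hω hωT
      rw [hc_def, hg_def]
      have step1 : (∫ x in Ioc (0:ℝ) R, x / (x ^ 2 + T ^ 2) ∂μ)
          ≤ ∫ x in Ioc (0:ℝ) R, x / (x ^ 2 + ω ^ 2) ∂μ := by
        refine setIntegral_mono_on hInt_T ((aux_cos_integrable μ hω).integrableOn)
          measurableSet_Ioc fun x hx => ?_
        have hd1 : (0:ℝ) < x ^ 2 + ω ^ 2 := by positivity
        have hd2 : (0:ℝ) < x ^ 2 + T ^ 2 := by positivity
        have hω2 : ω ^ 2 ≤ T ^ 2 := by nlinarith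
        rw [div_le_div_iff₀ hd2 hd1]
        nlinarith [hx.1.le, hω2, sq_nonneg x]
      refine le_trans step1 ?_
      refine setIntegral_mono_set ((aux_cos_integrable μ hω).integrableOn) ?_ ?_
      · filter_upwards [ae_restrict_mem measurableSet_Ici] with x hx
        exact div_nonneg hx (by positivity)
      · exact HasSubset.Subset.eventuallyLE (fun x hx => hx.1.le)
    -- split domain
    rw [show Ioi (0:ℝ) = Ioc 0 T ∪ Ioi T from (Ioc_union_Ioi_eq_Ioi hT0.le).symm]
    apply IntegrableOn.union
    · -- bounded part
      refine Integrable.mono' (g := fun _ : ℝ => T ^ β / (α ^ 2 * c))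
        ((integrableOn_const_iff).mpr (Or.inr measure_Ioc_lt_top))
        hFmeas.aestronglyMeasurable.restrict ?_
      rw [ae_restrict_iff' measurableSet_Ioc]
      refine Filter.Eventually.of_forall fun ω hω => ?_
      have hω0 : 0 < ω := hω.1
      rw [Real.norm_eq_abs, abs_of_nonneg (hF_nonneg ω hω0), hF_def]
      exact aux_key1 hα0 hc_pos (hg_lb ω hω0 hω.2) hω0 hω.2 hβ0.le
    · -- tail part
      refine Integrable.mono' (g := fun ω : ℝ => 2 * C * ω ^ (β - 3))
        (((integrableOn_Ioi_rpow_of_lt (by linarith) hT0).const_mul (2 * C)))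
        hFmeas.aestronglyMeasurable.restrict ?_
      rw [ae_restrict_iff' measurableSet_Ioi]
      refine Filter.Eventually.of_forall fun ω hω => ?_
      have hωT' : T < ω := hω
      have hω0 : 0 < ω := lt_trans hT0 hωT'
      rw [Real.norm_eq_abs, abs_of_nonneg (hF_nonneg ω hω0), hF_def]
      have hωT2 : 2 * α * C ≤ ω ^ 2 := by nlinarith [hT_sq]
      have hsub : ω / 2 ≤ ω - α * s ω := by
        have h1 : s ω ≤ 1 / ω * C := hs_ub ω hω0
        have h2 : α * s ω ≤ α * (1 / ω * C) :=
          mul_le_mul_of_nonneg_left h1 hα0.le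
        have h3 : α * (1 / ω * C) ≤ ω / 2 := by
          rw [show α * (1 / ω * C) = α * C / ω by ring,
            div_le_div_iff₀ hω0 (by norm_num : (0:ℝ) < 2)]
          nlinarith
        linarith
      exact aux_key2 hC0 (hg_nonneg ω) (hg_ub ω hω0) hsub hω0
end
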